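/- Generation part of the weak-total-order basis theorem: let S be a commutative ring, X a finite set. Every partial order r on X is congruent, modulo the kernel Z(X) of the compatibility pairing, to a ℤ-linear combination of weak total orders on X. Concretely, defining N(r) = {(a,b,c) : a <_r b, a ∥_r c, b ∥_r c}, if N(r) ≠ ∅ with witness (a,b,c) then r ≡ r∨[a<c] + r∨[c<b] − r∨[a<c<b] modulo Z(X), where r∨p denotes the join (transitive closure of union) of compatible orders; induction on |N(r)| terminates at weak total orders. -/

import Mathlib

/-- Two relations are compatible when the transitive closure of their union is
antisymmetric (i.e. the union is acyclic). -/
def Compatible {X : Type*} (r s : X → X → Prop) : Prop :=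
  ∀ a b : X, Relation.TransGen (fun u v => r u v ∨ s u v) a b →
    Relation.TransGen (fun u v => r u v ∨ s u v) b a → a = b

open Classical in
/-- The compatibility pairing with values in a commutative semiring. -/
noncomputable def bracket {X : Type*} (S : Type*) [CommSemiring S]
    (r s : X → X → Prop) : S :=
  if Compatible r s then 1 else 0

/-- A weak total order: a partial order in which `x < y` implies `x < z` or `z < y`. -/
def IsWeakTotalOrder (X : Type*) (r : X → X → Prop) : Prop :=
  IsPartialOrder X r ∧
    ∀ x y z : X, (r x y ∧ x ≠ y) → (r x z ∧ x ≠ z) ∨ (r z y ∧ z ≠ y)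

/-- `[a<c]`: the smallest partial order with `a < c`. -/
def pairRel {X : Type*} (a c : X) : X → X → Prop :=
  fun u v => u = v ∨ (u = a ∧ v = c)

/-- `[a<c<b]`: the smallest partial order with `a < c` and `c < b`. -/
def chainRel {X : Type*} (a c b : X) : X → X → Prop :=
  fun u v => u = v ∨ (u = a ∧ v = c) ∨ (u = c ∧ v = b) ∨ (u = a ∧ v = b)

/-- The join of two orders: the reflexive-transitive closure of their union. -/
def joinRel {X : Type*} (r p : X → X → Prop) : X → X → Prop :=
  Relation.ReflTransGen (fun u v => r u v ∨ p u v)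

open Relation


section Aux
variable {X : Type*}

private lemma compatible_iff_rtg {r s : X → X → Prop} :
    Compatible r s ↔ ∀ a b : X, ReflTransGen (fun u v => r u v ∨ s u v) a b →
      ReflTransGen (fun u v => r u v ∨ s u v) b a → a = b := by
  constructor
  · intro h a b hab hba
    rcases reflTransGen_iff_eq_or_transGen.mp hab with rfl | hab'
    · rfl
    rcases reflTransGen_iff_eq_or_transGen.mp hba with rfl | hba'
    · rfl
    exact h a b hab' hba'
  · intro h a b hab hba
    exact h a b hab.to_reflTransGen hba.to_reflTransGen

private lemma rtg_join {r p s : X → X → Prop} {x y : X} :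
    ReflTransGen (fun u v => joinRel r p u v ∨ s u v) x y ↔
      ReflTransGen (fun u v => (r u v ∨ s u v) ∨ p u v) x y := by
  constructor
  · intro h
    induction h with
    | refl => exact .refl
    | tail h' step ih =>
      rcases step with hj | hs
      · exact ih.trans (ReflTransGen.mono (fun u v h => h.elim (fun h => Or.inl (Or.inl h)) Or.inr) _ _ hj)
      · exact ih.tail (Or.inl (Or.inr hs))
  · intro h
    refine ReflTransGen.mono (fun u v h => ?_) _ _ h
    rcases h with (hr | hs) | hp
    · exact Or.inl (ReflTransGen.single (Or.inl hr))
    · exact Or.inr hs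
    · exact Or.inl (ReflTransGen.single (Or.inr hp))

private lemma compatible_join_iff {r p s : X → X → Prop} :
    Compatible (joinRel r p) s ↔
      ∀ x y : X, ReflTransGen (fun u v => (r u v ∨ s u v) ∨ p u v) x y →
        ReflTransGen (fun u v => (r u v ∨ s u v) ∨ p u v) y x → x = y := by
  rw [compatible_iff_rtg]
  constructor
  · intro h x y hxy hyx; exact h x y (rtg_join.mpr hxy) (rtg_join.mpr hyx)
  · intro h x y hxy hyx; exact h x y (rtg_join.mp hxy) (rtg_join.mp hyx)

private lemma forms_pair {q : X → X → Prop} {a c x y : X} :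
    ReflTransGen (fun u v => q u v ∨ pairRel a c u v) x y ↔
      ReflTransGen q x y ∨ (ReflTransGen q x a ∧ ReflTransGen q c y) := by
  constructor
  · intro h
    induction h with
    | refl => exact Or.inl .refl
    | tail h' step ih =>
      rcases step with hq | (rfl | ⟨rfl, rfl⟩)
      · rcases ih with h1 | ⟨h1, h2⟩
        · exact Or.inl (h1.tail hq)
        · exact Or.inr ⟨h1, h2.tail hq⟩
      · exact ih
      · rcases ih with h1 | ⟨h1, h2⟩
        · exact Or.inr ⟨h1, .refl⟩
        · exact Or.inr ⟨h1, .refl⟩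
  · rintro (h | ⟨h1, h2⟩)
    · exact ReflTransGen.mono (fun u v h => Or.inl h) _ _ h
    · have hedge : pairRel a c a c := Or.inr ⟨rfl, rfl⟩
      exact ((ReflTransGen.mono (fun u v h => Or.inl h) _ _ h1).tail
        (Or.inr hedge)).trans (ReflTransGen.mono (fun u v h => Or.inl h) _ _ h2)

private lemma forms_chain {q : X → X → Prop} {a c b x y : X} :
    ReflTransGen (fun u v => q u v ∨ chainRel a c b u v) x y ↔
      ReflTransGen q x y ∨ (ReflTransGen q x a ∧ ReflTransGen q c y) ∨
        (ReflTransGen q x c ∧ ReflTransGen q b y) ∨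
        (ReflTransGen q x a ∧ ReflTransGen q b y) := by
  constructor
  · intro h
    induction h with
    | refl => exact Or.inl .refl
    | tail h' step ih =>
      rcases step with hq | (rfl | ⟨rfl, rfl⟩ | ⟨rfl, rfl⟩ | ⟨rfl, rfl⟩)
      · rcases ih with h1 | ⟨h1, h2⟩ | ⟨h1, h2⟩ | ⟨h1, h2⟩
        · exact Or.inl (h1.tail hq)
        · exact Or.inr (Or.inl ⟨h1, h2.tail hq⟩)
        · exact Or.inr (Or.inr (Or.inl ⟨h1, h2.tail hq⟩))
        · exact Or.inr (Or.inr (Or.inr ⟨h1, h2.tail hq⟩))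
      · exact ih
      · -- edge a → c, target now c
        rcases ih with h1 | ⟨h1, h2⟩ | ⟨h1, h2⟩ | ⟨h1, h2⟩
        · exact Or.inr (Or.inl ⟨h1, .refl⟩)
        · exact Or.inr (Or.inl ⟨h1, .refl⟩)
        · exact Or.inl h1
        · exact Or.inr (Or.inl ⟨h1, .refl⟩)
      · -- edge c → b, target now b
        rcases ih with h1 | ⟨h1, h2⟩ | ⟨h1, h2⟩ | ⟨h1, h2⟩
        · exact Or.inr (Or.inr (Or.inl ⟨h1, .refl⟩))
        · exact Or.inr (Or.inr (Or.inr ⟨h1, .refl⟩))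
        · exact Or.inr (Or.inr (Or.inl ⟨h1, .refl⟩))
        · exact Or.inr (Or.inr (Or.inr ⟨h1, .refl⟩))
      · -- edge a → b, target now b
        rcases ih with h1 | ⟨h1, h2⟩ | ⟨h1, h2⟩ | ⟨h1, h2⟩
        · exact Or.inr (Or.inr (Or.inr ⟨h1, .refl⟩))
        · exact Or.inr (Or.inr (Or.inr ⟨h1, .refl⟩))
        · exact Or.inr (Or.inr (Or.inl ⟨h1, .refl⟩))
        · exact Or.inr (Or.inr (Or.inr ⟨h1, .refl⟩))
  · rintro (h | ⟨h1, h2⟩ | ⟨h1, h2⟩ | ⟨h1, h2⟩)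
    · exact ReflTransGen.mono (fun u v h => Or.inl h) _ _ h
    · have hedge : chainRel a c b a c := Or.inr (Or.inl ⟨rfl, rfl⟩)
      exact ((ReflTransGen.mono (fun u v h => Or.inl h) _ _ h1).tail
        (Or.inr hedge)).trans (ReflTransGen.mono (fun u v h => Or.inl h) _ _ h2)
    · have hedge : chainRel a c b c b := Or.inr (Or.inr (Or.inl ⟨rfl, rfl⟩))
      exact ((ReflTransGen.mono (fun u v h => Or.inl h) _ _ h1).tail
        (Or.inr hedge)).trans (ReflTransGen.mono (fun u v h => Or.inl h) _ _ h2)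
    · have hedge : chainRel a c b a b := Or.inr (Or.inr (Or.inr ⟨rfl, rfl⟩))
      exact ((ReflTransGen.mono (fun u v h => Or.inl h) _ _ h1).tail
        (Or.inr hedge)).trans (ReflTransGen.mono (fun u v h => Or.inl h) _ _ h2)

end Aux

section Split
variable {X : Type*} {S : Type*} [CommRing S]

private lemma compat_of_compat_join {r p s : X → X → Prop}
    (h : Compatible (joinRel r p) s) : Compatible r s := by
  rw [compatible_iff_rtg]
  rw [compatible_join_iff] at h
  intro x y hxy hyx
  exact h x y (ReflTransGen.mono (fun u v h => Or.inl h) _ _ hxy) (ReflTransGen.mono (fun u v h => Or.inl h) _ _ hyx)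

private lemma bracket_split (r s : X → X → Prop) (a b c : X)
    (hab : r a b) (hne_ab : a ≠ b) (hne_ac : a ≠ c) (hne_bc : b ≠ c) :
    bracket S r s + bracket S (joinRel r (chainRel a c b)) s =
      bracket S (joinRel r (pairRel a c)) s + bracket S (joinRel r (pairRel c b)) s := by
  classical
  by_cases hc : Compatible r s
  case neg =>
    have h1 : ¬ Compatible (joinRel r (pairRel a c)) s := fun h => hc (compat_of_compat_join h)
    have h2 : ¬ Compatible (joinRel r (pairRel c b)) s := fun h => hc (compat_of_compat_join h)
    have h3 : ¬ Compatible (joinRel r (chainRel a c b)) s := fun h => hc (compat_of_compat_join h)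
    simp [bracket, hc, h1, h2, h3]
  case pos =>
    set q : X → X → Prop := fun u v => r u v ∨ s u v with hq
    have hA : ∀ x y, ReflTransGen q x y → ReflTransGen q y x → x = y :=
      compatible_iff_rtg.mp hc
    have hRab : ReflTransGen q a b := ReflTransGen.single (Or.inl hab)
    have hnRba : ¬ ReflTransGen q b a := fun h => hne_ab (hA a b hRab h)
    have e1 : Compatible (joinRel r (pairRel a c)) s ↔ ¬ ReflTransGen q c a := by
      rw [compatible_join_iff]
      constructor
      · intro h hca
        exact hne_ac (h a c (forms_pair.mpr (Or.inr ⟨.refl, .refl⟩))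
          (forms_pair.mpr (Or.inl hca)))
      · intro hnca x y hxy hyx
        rcases forms_pair.mp hxy with h1 | ⟨h1, h2⟩ <;>
          rcases forms_pair.mp hyx with h3 | ⟨h3, h4⟩
        · exact hA x y h1 h3
        · exact absurd ((h4.trans h1).trans h3) hnca
        · exact absurd ((h2.trans h3).trans h1) hnca
        · exact absurd (h4.trans h1) hnca
    have e2 : Compatible (joinRel r (pairRel c b)) s ↔ ¬ ReflTransGen q b c := by
      rw [compatible_join_iff]
      constructor
      · intro h hbc
        exact hne_bc (h c b (forms_pair.mpr (Or.inr ⟨.refl, .refl⟩))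
          (forms_pair.mpr (Or.inl hbc))).symm
      · intro hnbc x y hxy hyx
        rcases forms_pair.mp hxy with h1 | ⟨h1, h2⟩ <;>
          rcases forms_pair.mp hyx with h3 | ⟨h3, h4⟩
        · exact hA x y h1 h3
        · exact absurd ((h4.trans h1).trans h3) hnbc
        · exact absurd ((h2.trans h3).trans h1) hnbc
        · exact absurd (h4.trans h1) hnbc
    have e3 : Compatible (joinRel r (chainRel a c b)) s ↔
        ¬ ReflTransGen q c a ∧ ¬ ReflTransGen q b c := by
      rw [compatible_join_iff]
      constructor
      · intro h
        constructor
        · intro hca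
          exact hne_ac (h a c (forms_chain.mpr (Or.inr (Or.inl ⟨.refl, .refl⟩)))
            (forms_chain.mpr (Or.inl hca)))
        · intro hbc
          exact hne_bc (h c b (forms_chain.mpr (Or.inr (Or.inr (Or.inl ⟨.refl, .refl⟩))))
            (forms_chain.mpr (Or.inl hbc))).symm
      · rintro ⟨hnca, hnbc⟩ x y hxy hyx
        rcases forms_chain.mp hxy with h1 | ⟨h1, h2⟩ | ⟨h1, h2⟩ | ⟨h1, h2⟩ <;>
          rcases forms_chain.mp hyx with h3 | ⟨h3, h4⟩ | ⟨h3, h4⟩ | ⟨h3, h4⟩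
        · exact hA x y h1 h3
        · exact absurd ((h4.trans h1).trans h3) hnca
        · exact absurd ((h4.trans h1).trans h3) hnbc
        · exact absurd ((h4.trans h1).trans h3) hnRba
        · exact absurd ((h2.trans h3).trans h1) hnca
        · exact absurd (h4.trans h1) hnca
        · exact absurd (h4.trans h1) hnRba
        · exact absurd (h4.trans h1) hnRba
        · exact absurd ((h2.trans h3).trans h1) hnbc
        · exact absurd (h2.trans h3) hnRba
        · exact absurd (h2.trans h3) hnbc
        · exact absurd (h2.trans h3) hnRba
        · exact absurd ((h2.trans h3).trans h1) hnRba
        · exact absurd (h4.trans h1) hnca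
        · exact absurd (h4.trans h1) hnRba
        · exact absurd (h4.trans h1) hnRba
    have hexcl : ¬ (ReflTransGen q c a ∧ ReflTransGen q b c) := by
      rintro ⟨hca, hbc⟩
      exact hne_ac (hA a c (hRab.trans hbc) hca)
    have b0 : bracket S r s = (1 : S) := if_pos hc
    have b1 : bracket S (joinRel r (pairRel a c)) s =
        if ¬ ReflTransGen q c a then (1 : S) else 0 := by
      simp only [bracket]; exact if_congr e1 rfl rfl
    have b2 : bracket S (joinRel r (pairRel c b)) s =
        if ¬ ReflTransGen q b c then (1 : S) else 0 := by
      simp only [bracket]; exact if_congr e2 rfl rfl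
    have b3 : bracket S (joinRel r (chainRel a c b)) s =
        if ¬ ReflTransGen q c a ∧ ¬ ReflTransGen q b c then (1 : S) else 0 := by
      simp only [bracket]; exact if_congr e3 rfl rfl
    rw [b0, b1, b2, b3]
    by_cases h1 : ReflTransGen q c a <;> by_cases h2 : ReflTransGen q b c
    · exact absurd ⟨h1, h2⟩ hexcl
    · simp [h1, h2]
    · simp [h1, h2]
    · simp [h1, h2]

end Split

section Gen
variable {X : Type*}

private lemma join_pair_iff {r : X → X → Prop} (hrefl : Reflexive r) (htrans : Transitive r)
    {a c x y : X} : joinRel r (pairRel a c) x y ↔ r x y ∨ (r x a ∧ r c y) := by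
  have h := @forms_pair X r a c x y
  haveI : Std.Refl r := ⟨hrefl⟩
  haveI : IsTrans X r := ⟨htrans⟩
  rwa [reflTransGen_eq_self (r := r)] at h

private lemma join_chain_iff {r : X → X → Prop} (hrefl : Reflexive r) (htrans : Transitive r)
    {a c b x y : X} : joinRel r (chainRel a c b) x y ↔
      r x y ∨ (r x a ∧ r c y) ∨ (r x c ∧ r b y) ∨ (r x a ∧ r b y) := by
  have h := @forms_chain X r a c b x y
  haveI : Std.Refl r := ⟨hrefl⟩
  haveI : IsTrans X r := ⟨htrans⟩
  rwa [reflTransGen_eq_self (r := r)] at h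

private lemma po_join_pair {r : X → X → Prop} (hr : IsPartialOrder X r) {a c : X}
    (hac : ¬ r a c) (hca : ¬ r c a) : IsPartialOrder X (joinRel r (pairRel a c)) := by
  have hrefl : Reflexive r := fun x => hr.refl x
  have htrans : Transitive r := fun x y z h1 h2 => hr.trans x y z h1 h2
  refine { refl := fun x => ReflTransGen.refl, trans := fun x y z h1 h2 => h1.trans h2,
           antisymm := ?_ }
  intro x y hxy hyx
  rw [join_pair_iff hrefl htrans] at hxy hyx
  rcases hxy with h1 | ⟨h1, h2⟩ <;> rcases hyx with h3 | ⟨h3, h4⟩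
  · exact hr.antisymm x y h1 h3
  · exact absurd (htrans (htrans h4 h1) h3) hca
  · exact absurd (htrans (htrans h2 h3) h1) hca
  · exact absurd (htrans h4 h1) hca

private lemma po_join_chain {r : X → X → Prop} (hr : IsPartialOrder X r) {a b c : X}
    (hab : r a b) (hneab : a ≠ b) (hac : ¬ r a c) (hca : ¬ r c a)
    (hbc : ¬ r b c) (hcb : ¬ r c b) : IsPartialOrder X (joinRel r (chainRel a c b)) := by
  have hrefl : Reflexive r := fun x => hr.refl x
  have htrans : Transitive r := fun x y z h1 h2 => hr.trans x y z h1 h2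
  have hnba : ¬ r b a := fun h => hneab (hr.antisymm a b hab h)
  refine { refl := fun x => ReflTransGen.refl, trans := fun x y z h1 h2 => h1.trans h2,
           antisymm := ?_ }
  intro x y hxy hyx
  rw [join_chain_iff hrefl htrans] at hxy hyx
  rcases hxy with h1 | ⟨h1, h2⟩ | ⟨h1, h2⟩ | ⟨h1, h2⟩ <;>
    rcases hyx with h3 | ⟨h3, h4⟩ | ⟨h3, h4⟩ | ⟨h3, h4⟩
  · exact hr.antisymm x y h1 h3
  · exact absurd (htrans (htrans h4 h1) h3) hca
  · exact absurd (htrans (htrans h4 h1) h3) hbc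
  · exact absurd (htrans (htrans h4 h1) h3) hnba
  · exact absurd (htrans (htrans h2 h3) h1) hca
  · exact absurd (htrans h4 h1) hca
  · exact absurd (htrans h4 h1) hnba
  · exact absurd (htrans h4 h1) hnba
  · exact absurd (htrans (htrans h2 h3) h1) hbc
  · exact absurd (htrans h2 h3) hnba
  · exact absurd (htrans h2 h3) hbc
  · exact absurd (htrans h2 h3) hnba
  · exact absurd (htrans (htrans h2 h3) h1) hnba
  · exact absurd (htrans h4 h1) hca
  · exact absurd (htrans h4 h1) hnba
  · exact absurd (htrans h4 h1) hnba

private lemma gen_aux [Finite X] (S : Type*) [CommRing S] :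
    ∀ n : ℕ, ∀ r : X → X → Prop, IsPartialOrder X r →
      Set.ncard {p : X × X | ¬ r p.1 p.2 ∧ ¬ r p.2 p.1} < n →
      ∃ f : (X → X → Prop) →₀ ℤ,
        (∀ w ∈ f.support, IsWeakTotalOrder X w) ∧
        ∀ s : X → X → Prop, IsPartialOrder X s →
          bracket S r s = f.sum fun w k => k • bracket S w s := by
  classical
  intro n
  induction n with
  | zero => exact fun r hr h => absurd h (Nat.not_lt_zero _)
  | succ n ih =>
    intro r hr hlt
    by_cases hN : ∃ a b c : X, (r a b ∧ a ≠ b) ∧ (¬ r a c ∧ ¬ r c a) ∧ (¬ r b c ∧ ¬ r c b)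
    · obtain ⟨a, b, c, ⟨hab, hneab⟩, ⟨hac, hca⟩, ⟨hbc, hcb⟩⟩ := hN
      have hneac : a ≠ c := fun h => hac (h ▸ hr.refl a)
      have hnebc : b ≠ c := fun h => hbc (h ▸ hr.refl b)
      have po1 := po_join_pair hr hac hca
      have po2 := po_join_pair hr hcb hbc
      have po3 := po_join_chain hr hab hneab hac hca hbc hcb
      have key : ∀ p : X → X → Prop, ∀ u v : X, joinRel r p u v → ¬ r u v → ¬ r v u →
          Set.ncard {q : X × X | ¬ joinRel r p q.1 q.2 ∧ ¬ joinRel r p q.2 q.1} < n := by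
        intro p u v huv hruv hrvu
        have hsub : {q : X × X | ¬ joinRel r p q.1 q.2 ∧ ¬ joinRel r p q.2 q.1} ⊆
            {q : X × X | ¬ r q.1 q.2 ∧ ¬ r q.2 q.1} := by
          rintro ⟨x, y⟩ ⟨h1, h2⟩
          exact ⟨fun h => h1 (ReflTransGen.single (Or.inl h)),
                 fun h => h2 (ReflTransGen.single (Or.inl h))⟩
        have hss := (Set.ssubset_iff_of_subset hsub).mpr
          ⟨(u, v), ⟨hruv, hrvu⟩, fun h => h.1 huv⟩
        have := Set.ncard_lt_ncard hss (Set.toFinite _)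
        omega
      have j1 : joinRel r (pairRel a c) a c :=
        ReflTransGen.single (Or.inr (Or.inr ⟨rfl, rfl⟩))
      have j2 : joinRel r (pairRel c b) c b :=
        ReflTransGen.single (Or.inr (Or.inr ⟨rfl, rfl⟩))
      have j3 : joinRel r (chainRel a c b) a c :=
        ReflTransGen.single (Or.inr (Or.inr (Or.inl ⟨rfl, rfl⟩)))
      obtain ⟨f1, hw1, he1⟩ := ih _ po1 (key _ _ _ j1 hac hca)
      obtain ⟨f2, hw2, he2⟩ := ih _ po2 (key _ _ _ j2 hcb hbc)
      obtain ⟨f3, hw3, he3⟩ := ih _ po3 (key _ _ _ j3 hac hca)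
      refine ⟨f1 + f2 - f3, ?_, ?_⟩
      · intro w hw
        rcases Finset.mem_union.mp (Finsupp.support_sub hw) with h | h
        · rcases Finset.mem_union.mp (Finsupp.support_add h) with h' | h'
          · exact hw1 w h'
          · exact hw2 w h'
        · exact hw3 w h
      · intro s hs
        have hsplit := bracket_split (S := S) r s a b c hab hneab hneac hnebc
        have hsum : ((f1 + f2 - f3).sum fun w k => k • bracket S w s) =
            (f1.sum fun w k => k • bracket S w s) + (f2.sum fun w k => k • bracket S w s)
              - (f3.sum fun w k => k • bracket S w s) := by
          rw [Finsupp.sum_sub_index (fun w k1 k2 => sub_smul k1 k2 (bracket S w s)),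
            Finsupp.sum_add_index' (h := fun w k => k • bracket S w s)
              (fun w => zero_smul ℤ (bracket S w s))
              (fun w k1 k2 => add_smul k1 k2 (bracket S w s))]
        rw [hsum, ← he1 s hs, ← he2 s hs, ← he3 s hs]
        linear_combination hsplit
    · have hweak : IsWeakTotalOrder X r := by
        refine ⟨hr, ?_⟩
        rintro x y z ⟨hxy, hnexy⟩
        by_cases hxz : x = z
        · exact Or.inr ⟨hxz ▸ hxy, hxz ▸ hnexy⟩
        by_cases hzy : z = y
        · exact Or.inl ⟨hzy ▸ hxy, hxz⟩
        by_cases h1 : r x z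
        · exact Or.inl ⟨h1, hxz⟩
        by_cases h2 : r z y
        · exact Or.inr ⟨h2, hzy⟩
        by_cases h3 : r z x
        · exact Or.inr ⟨hr.trans z x y h3 hxy, hzy⟩
        by_cases h4 : r y z
        · exact Or.inl ⟨hr.trans x y z hxy h4, hxz⟩
        · exact absurd ⟨x, y, z, ⟨hxy, hnexy⟩, ⟨h1, h3⟩, ⟨h4, h2⟩⟩ hN
      refine ⟨Finsupp.single r 1, ?_, ?_⟩
      · intro w hwsup
        rw [Finsupp.support_single_ne_zero _ one_ne_zero, Finset.mem_singleton] at hwsup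
        exact hwsup ▸ hweak
      · intro s hs
        rw [Finsupp.sum_single_index (h := fun w k => k • bracket S w s)
          (zero_smul ℤ (bracket S r s)), one_smul]

end Gen

theorem stmt17 {X : Type*} [Finite X] {S : Type*} [CommRing S] :
    -- every partial order is congruent modulo the kernel of the pairing to a
    -- ℤ-linear combination of weak total orders
    (∀ r : X → X → Prop, IsPartialOrder X r →
      ∃ (n : ℕ) (w : Fin n → (X → X → Prop)) (c : Fin n → ℤ),
        (∀ i, IsWeakTotalOrder X (w i)) ∧
        ∀ s : X → X → Prop, IsPartialOrder X s →
          bracket S r s = ∑ i, c i • bracket S (w i) s) ∧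
    -- the splitting identity at a witness (a,b,c) ∈ N(r)
    (∀ r : X → X → Prop, IsPartialOrder X r → ∀ a b c : X,
      (r a b ∧ a ≠ b) → (¬ r a c ∧ ¬ r c a) → (¬ r b c ∧ ¬ r c b) →
      ∀ s : X → X → Prop, IsPartialOrder X s →
        bracket S r s + bracket S (joinRel r (chainRel a c b)) s =
          bracket S (joinRel r (pairRel a c)) s +
            bracket S (joinRel r (pairRel c b)) s) := by
  constructor
  · intro r hr
    obtain ⟨f, hw, he⟩ := gen_aux S (Set.ncard {p : X × X | ¬ r p.1 p.2 ∧ ¬ r p.2 p.1} + 1)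
      r hr (Nat.lt_succ_self _)
    refine ⟨f.support.card, fun i => ↑(f.support.equivFin.symm i),
      fun i => f ↑(f.support.equivFin.symm i), fun i => hw _ (Subtype.mem _), ?_⟩
    intro s hs
    rw [he s hs]
    calc (f.sum fun w k => k • bracket S w s)
        = ∑ w ∈ f.support, f w • bracket S w s := rfl
      _ = ∑ w : f.support, f ↑w • bracket S (↑w) s :=
          (Finset.sum_coe_sort f.support (fun w => f w • bracket S w s)).symm
      _ = ∑ i, f ↑(f.support.equivFin.symm i) • bracket S (↑(f.support.equivFin.symm i)) s :=
          (Equiv.sum_comp f.support.equivFin.symm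
            (fun w : f.support => f ↑w • bracket S (↑w) s)).symm
  · rintro r hr a b c ⟨hab, hneab⟩ ⟨hac, hca⟩ ⟨hbc, hcb⟩ s hs
    have hneac : a ≠ c := fun h => hac (h ▸ hr.refl a)
    have hnebc : b ≠ c := fun h => hbc (h ▸ hr.refl b)
    exact bracket_split r s a b c hab hneab hneac hnebc
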